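/- Under the Hedge iteration with strategies Y⁰,…,Yᴷ and learning rates αₖ > 0 starting from interior X⁰, for any strategy Y in the simplex and any p in the support of Y: (CȲᴷ)ₚ - Ȳᴷ · CȲᴷ = (1/A_K)[ln(X^{K+1}(p)/X⁰(p)) - Σⱼ Ȳᴷ(j)·ln(X^{K+1}(j)/X⁰(j))]. -/

import Mathlib

open Matrix Finset

/-- Approximation-error identity for the weighted empirical average of the Hedge iteration. -/
theorem hedge_average_error_identity {n : ℕ}
    (C : Matrix (Fin n) (Fin n) ℝ)
    (X : ℕ → Fin n → ℝ) (Y : ℕ → Fin n → ℝ) (α : ℕ → ℝ)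
    (hα : ∀ k, 0 < α k)
    (hX0 : ∀ i, 0 < X 0 i) (hX0s : X 0 ∈ stdSimplex ℝ (Fin n))
    (hYk : ∀ k, Y k ∈ stdSimplex ℝ (Fin n))
    (hiter : ∀ k i, X (k + 1) i =
      X k i * Real.exp (α k * C.mulVec (Y k) i) /
        (∑ j, X k j * Real.exp (α k * C.mulVec (Y k) j)))
    (K : ℕ)
    (Ybar : Fin n → ℝ)
    (hYbar : Ybar = (∑ k ∈ range (K + 1), α k)⁻¹ • ∑ k ∈ range (K + 1), α k • Y k)
    (Yv : Fin n → ℝ) (hYv : Yv ∈ stdSimplex ℝ (Fin n))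
    (p : Fin n) (hp : 0 < Yv p) :
    C.mulVec Ybar p - Ybar ⬝ᵥ C.mulVec Ybar =
      (∑ k ∈ range (K + 1), α k)⁻¹ * Real.log (X (K + 1) p / X 0 p) -
        (∑ k ∈ range (K + 1), α k)⁻¹ *
          ∑ j, Ybar j * Real.log (X (K + 1) j / X 0 j) := by
  classical
  have hne : Nonempty (Fin n) := by
    rcases isEmpty_or_nonempty (Fin n) with h | h
    · exact absurd hX0s.2 (by simp)
    · exact h
  have hXpos : ∀ k i, 0 < X k i := by
    intro k
    induction k with
    | zero => exact hX0
    | succ k ih =>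
      intro i
      rw [hiter]
      exact div_pos (mul_pos (ih i) (Real.exp_pos _))
        (Finset.sum_pos (fun j _ => mul_pos (ih j) (Real.exp_pos _)) univ_nonempty)
  obtain ⟨Z, hZdef⟩ : ∃ Z : ℕ → ℝ,
      ∀ k, Z k = ∑ j, X k j * Real.exp (α k * C.mulVec (Y k) j) := ⟨_, fun k => rfl⟩
  have hZpos : ∀ k, 0 < Z k := by
    intro k
    rw [hZdef]
    exact Finset.sum_pos (fun j _ => mul_pos (hXpos k j) (Real.exp_pos _)) univ_nonempty
  have hlog : ∀ M i, Real.log (X M i / X 0 i)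
      = (∑ k ∈ range M, α k * C.mulVec (Y k) i) - ∑ k ∈ range M, Real.log (Z k) := by
    intro M
    induction M with
    | zero => intro i; simp [div_self (hXpos 0 i).ne']
    | succ M ih =>
      intro i
      rw [Finset.sum_range_succ, Finset.sum_range_succ, hiter, ← hZdef]
      have h1 : X M i * Real.exp (α M * C.mulVec (Y M) i) / Z M / X 0 i
          = (X M i / X 0 i) * Real.exp (α M * C.mulVec (Y M) i) / Z M := by ring
      rw [h1, Real.log_div (mul_ne_zero (div_pos (hXpos M i) (hX0 i)).ne'
            (Real.exp_pos _).ne') (hZpos M).ne',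
          Real.log_mul (div_pos (hXpos M i) (hX0 i)).ne' (Real.exp_pos _).ne',
          Real.log_exp, ih]
      ring
  set A := ∑ k ∈ range (K + 1), α k with hAdef
  have hApos : 0 < A := Finset.sum_pos (fun k _ => hα k) nonempty_range_add_one
  have hYbarsum : ∑ j, Ybar j = 1 := by
    rw [hYbar]
    simp only [Pi.smul_apply, Finset.sum_apply, smul_eq_mul]
    rw [← Finset.mul_sum, Finset.sum_comm]
    have h : ∀ k ∈ range (K + 1), ∑ j, α k * Y k j = α k := by
      intro k _
      rw [← Finset.mul_sum, (hYk k).2, mul_one]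
    rw [Finset.sum_congr rfl h, ← hAdef]
    exact inv_mul_cancel₀ hApos.ne'
  have hCbar : ∀ i, C.mulVec Ybar i
      = A⁻¹ * ∑ k ∈ range (K + 1), α k * C.mulVec (Y k) i := by
    intro i
    simp only [hYbar, Matrix.mulVec, dotProduct, Pi.smul_apply, Finset.sum_apply,
      smul_eq_mul, Finset.mul_sum]
    rw [Finset.sum_comm]
    refine Finset.sum_congr rfl fun k _ => ?_
    refine Finset.sum_congr rfl fun j _ => ?_
    ring
  have hdot : Ybar ⬝ᵥ C.mulVec Ybar = ∑ j, Ybar j * C.mulVec Ybar j := rfl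
  have key : ∀ (S : ℝ) (T : Fin n → ℝ),
      A⁻¹ * T p - ∑ j, Ybar j * (A⁻¹ * T j)
        = A⁻¹ * (T p - S) - A⁻¹ * ∑ j, Ybar j * (T j - S) := by
    intro S T
    have h2 : ∑ j, Ybar j * (T j - S) = (∑ j, Ybar j * T j) - S := by
      simp only [mul_sub]
      rw [Finset.sum_sub_distrib, ← Finset.sum_mul, hYbarsum, one_mul]
    have h1 : ∑ j, Ybar j * (A⁻¹ * T j) = A⁻¹ * ∑ j, Ybar j * T j := by
      rw [Finset.mul_sum]
      exact Finset.sum_congr rfl fun j _ => by ring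
    rw [h1, h2]
    ring
  rw [hdot]
  simp only [hlog, hCbar]
  exact key (∑ k ∈ range (K + 1), Real.log (Z k))
    (fun i => ∑ k ∈ range (K + 1), α k * C.mulVec (Y k) i)
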